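/- The coefficient of x^{4k} y^{4k} in f_3(x,y) = (x-y-γ_0) ∏_{j=1}^{2k} (x-α_j)(y-β_j)(x-y-γ_j)(x+y-δ_j) equals (-1)^k binomial(2k,k) [ Σ_{j=1}^{2k} (-α_j) - Σ_{j=1}^{2k} (-β_j) + Σ_{j=0}^{2k} (-γ_j) ]. -/

import Mathlib

open MvPolynomial Finset

-- helper: degree on Fin 2
lemma deg2 (d : Fin 2 →₀ ℕ) : d.degree = d 0 + d 1 := by
  rw [Finsupp.degree_apply, Finset.sum_subset (Finset.subset_univ _) (by simp)]
  exact Fin.sum_univ_two d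

example (n : ℕ) : (Finsupp.single (0:Fin 2) n + Finsupp.single 1 n).degree = n + n := by
  rw [deg2]; simp

-- key structural lemma
lemma key {ι : Type*} [DecidableEq ι] (s : Finset ι) (L : ι → MvPolynomial (Fin 2) ℝ)
    (c : ι → ℝ) (hL : ∀ i ∈ s, (L i).IsHomogeneous 1) (m : Fin 2 →₀ ℕ)
    (hm : m.degree + 1 = s.card) :
    coeff m (∏ i ∈ s, (L i + C (c i))) = ∑ i ∈ s, c i * coeff m (∏ j ∈ s.erase i, L j) := by
  rw [Finset.prod_add, coeff_sum]
  have hterm : ∀ t ∈ s.powerset,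
      coeff m ((∏ i ∈ t, L i) * ∏ i ∈ s \ t, C (c i)) =
      (∏ i ∈ s \ t, c i) * coeff m (∏ i ∈ t, L i) := by
    intro t ht
    rw [← map_prod, mul_comm, coeff_C_mul]
  rw [Finset.sum_congr rfl hterm]
  have h0 : ∀ t ∈ s.powerset, (∏ i ∈ s \ t, c i) * coeff m (∏ i ∈ t, L i) ≠ 0 →
      t.card = m.degree := by
    intro t ht hne
    by_contra hcard
    have hsub := Finset.mem_powerset.mp ht
    have hhom : (∏ i ∈ t, L i).IsHomogeneous (∑ _i ∈ t, 1) :=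
      MvPolynomial.IsHomogeneous.prod t L _ (fun i hi => hL i (hsub hi))
    rw [Finset.sum_const, smul_eq_mul, mul_one] at hhom
    exact hne (by rw [hhom.coeff_eq_zero (fun h => hcard h.symm), mul_zero])
  rw [← Finset.sum_filter_of_ne h0]
  have himg : (s.powerset.filter (fun t => t.card = m.degree)) = s.image (fun i => s.erase i) := by
    ext t
    simp only [Finset.mem_filter, Finset.mem_powerset, Finset.mem_image]
    constructor
    · rintro ⟨hsub, hcard⟩
      have hcs : (s \ t).card = 1 := by
        rw [Finset.card_sdiff_of_subset hsub]; omega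
      obtain ⟨i, hi⟩ := Finset.card_eq_one.mp hcs
      have hiins : i ∈ s \ t := hi ▸ Finset.mem_singleton_self i
      refine ⟨i, (Finset.mem_sdiff.mp hiins).1, ?_⟩
      rw [Finset.erase_eq, ← hi, Finset.sdiff_sdiff_eq_self hsub]
    · rintro ⟨i, hi, rfl⟩
      refine ⟨Finset.erase_subset _ _, ?_⟩
      rw [Finset.card_erase_of_mem hi]; omega
  rw [himg, Finset.sum_image (fun i hi j hj hij => ?inj)]
  · apply Finset.sum_congr rfl
    intro i hi
    congr 1
    have : s \ s.erase i = {i} := by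
      ext x
      simp only [Finset.mem_sdiff, Finset.mem_erase, Finset.mem_singleton]
      constructor
      · rintro ⟨hx, hx2⟩; by_contra hne; exact hx2 ⟨hne, hx⟩
      · rintro rfl; exact ⟨hi, fun h => h.1 rfl⟩
    rw [this, Finset.prod_singleton]
  case inj =>
    by_contra hne
    have : i ∈ s.erase j := Finset.mem_erase.mpr ⟨hne, hi⟩
    rw [← hij] at this
    exact (Finset.notMem_erase i s) this

lemma monocoeff (a b p q : ℕ) :
    coeff (Finsupp.single 0 p + Finsupp.single 1 q)
      ((X 0 : MvPolynomial (Fin 2) ℝ) ^ a * X 1 ^ b) = if p = a ∧ q = b then 1 else 0 := by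
  rw [X_pow_eq_monomial, X_pow_eq_monomial, monomial_mul, one_mul, coeff_monomial]
  congr 1
  simp only [eq_iff_iff]
  constructor
  · intro h
    have h0 := DFunLike.congr_fun h 0
    have h1 := DFunLike.congr_fun h 1
    simp [Finsupp.single_apply] at h0 h1
    exact ⟨h0.symm, h1.symm⟩
  · rintro ⟨rfl, rfl⟩; rfl

lemma coeff_core (a b n p q : ℕ) :
    coeff (Finsupp.single 0 p + Finsupp.single 1 q)
      ((X 0 : MvPolynomial (Fin 2) ℝ) ^ a * X 1 ^ b * (X 0 ^ 2 - X 1 ^ 2) ^ n) =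
    ∑ i ∈ Finset.range (n + 1), ((n.choose i : ℝ) * (-1) ^ (n - i)) *
      (if p = a + 2 * i ∧ q = b + 2 * (n - i) then 1 else 0) := by
  rw [sub_eq_add_neg, add_pow, Finset.mul_sum, coeff_sum]
  apply Finset.sum_congr rfl
  intro i hi
  have hrw : (X 0 : MvPolynomial (Fin 2) ℝ) ^ a * X 1 ^ b *
      ((X 0 ^ 2) ^ i * (-X 1 ^ 2) ^ (n - i) * (n.choose i : MvPolynomial (Fin 2) ℝ)) =
      C ((n.choose i : ℝ) * (-1) ^ (n - i)) * (X 0 ^ (a + 2 * i) * X 1 ^ (b + 2 * (n - i))) := by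
    rw [map_mul, map_pow, map_neg, map_one, ← C_eq_coe_nat]
    ring
  rw [hrw, coeff_C_mul, monocoeff]

lemma sum_pick (n a b p q i0 : ℕ) (hi0 : i0 ≤ n) (hp : p = a + 2 * i0)
    (hq : q = b + 2 * (n - i0)) :
    ∑ i ∈ Finset.range (n + 1), ((n.choose i : ℝ) * (-1) ^ (n - i)) *
      (if p = a + 2 * i ∧ q = b + 2 * (n - i) then 1 else 0) =
    (n.choose i0 : ℝ) * (-1) ^ (n - i0) := by
  rw [Finset.sum_eq_single i0]
  · rw [if_pos ⟨hp, hq⟩, mul_one]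
  · intro i hi hne
    rw [if_neg, mul_zero]
    rintro ⟨h1, h2⟩
    exact hne (by omega)
  · intro h; exact absurd (Finset.mem_range.mpr (by omega)) h

lemma sum_none (n a b p q : ℕ) (h : ∀ i, i ≤ n → ¬(p = a + 2 * i ∧ q = b + 2 * (n - i))) :
    ∑ i ∈ Finset.range (n + 1), ((n.choose i : ℝ) * (-1) ^ (n - i)) *
      (if p = a + 2 * i ∧ q = b + 2 * (n - i) then 1 else 0) = 0 := by
  apply Finset.sum_eq_zero
  intro i hi
  rw [if_neg (h i (by simp only [Finset.mem_range] at hi; omega)), mul_zero]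

lemma pows (N : ℕ) : (X 0 - X 1 : MvPolynomial (Fin 2) ℝ) ^ N * (X 0 + X 1) ^ N
    = (X 0 ^ 2 - X 1 ^ 2) ^ N := by rw [← mul_pow]; congr 1; ring

lemma cA (u : ℕ) :
    coeff (Finsupp.single 0 (4*u+4) + Finsupp.single 1 (4*u+4))
      ((X 0 : MvPolynomial (Fin 2) ℝ) ^ (2*u+1) * X 1 ^ (2*u+2) *
        (X 0 - X 1) ^ (2*u+3) * (X 0 + X 1) ^ (2*u+2)) =
    ((2*u+2).choose (u+1) : ℝ) * (-1) ^ (u+1) := by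
  have hsplit : (X 0 : MvPolynomial (Fin 2) ℝ) ^ (2*u+1) * X 1 ^ (2*u+2) *
        (X 0 - X 1) ^ (2*u+3) * (X 0 + X 1) ^ (2*u+2) =
      X 0 ^ (2*u+2) * X 1 ^ (2*u+2) * (X 0 ^ 2 - X 1 ^ 2) ^ (2*u+2)
      - X 0 ^ (2*u+1) * X 1 ^ (2*u+3) * (X 0 ^ 2 - X 1 ^ 2) ^ (2*u+2) := by
    rw [← pows (2*u+2)]; ring
  rw [hsplit, coeff_sub, coeff_core, coeff_core,
    sum_pick (2*u+2) (2*u+2) (2*u+2) _ _ (u+1) (by omega) (by omega) (by omega),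
    sum_none (2*u+2) (2*u+1) (2*u+3) _ _ (by intro i hi ⟨h1, h2⟩; omega)]
  have : 2*u+2 - (u+1) = u+1 := by omega
  rw [this, sub_zero]

lemma cB (u : ℕ) :
    coeff (Finsupp.single 0 (4*u+4) + Finsupp.single 1 (4*u+4))
      ((X 0 : MvPolynomial (Fin 2) ℝ) ^ (2*u+2) * X 1 ^ (2*u+1) *
        (X 0 - X 1) ^ (2*u+3) * (X 0 + X 1) ^ (2*u+2)) =
    -(((2*u+2).choose (u+1) : ℝ) * (-1) ^ (u+1)) := by
  have hsplit : (X 0 : MvPolynomial (Fin 2) ℝ) ^ (2*u+2) * X 1 ^ (2*u+1) *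
        (X 0 - X 1) ^ (2*u+3) * (X 0 + X 1) ^ (2*u+2) =
      X 0 ^ (2*u+3) * X 1 ^ (2*u+1) * (X 0 ^ 2 - X 1 ^ 2) ^ (2*u+2)
      - X 0 ^ (2*u+2) * X 1 ^ (2*u+2) * (X 0 ^ 2 - X 1 ^ 2) ^ (2*u+2) := by
    rw [← pows (2*u+2)]; ring
  rw [hsplit, coeff_sub, coeff_core, coeff_core,
    sum_pick (2*u+2) (2*u+2) (2*u+2) _ _ (u+1) (by omega) (by omega) (by omega),
    sum_none (2*u+2) (2*u+3) (2*u+1) _ _ (by intro i hi ⟨h1, h2⟩; omega)]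
  have : 2*u+2 - (u+1) = u+1 := by omega
  rw [this, zero_sub]

lemma cG (u : ℕ) :
    coeff (Finsupp.single 0 (4*u+4) + Finsupp.single 1 (4*u+4))
      ((X 0 : MvPolynomial (Fin 2) ℝ) ^ (2*u+2) * X 1 ^ (2*u+2) *
        (X 0 - X 1) ^ (2*u+2) * (X 0 + X 1) ^ (2*u+2)) =
    ((2*u+2).choose (u+1) : ℝ) * (-1) ^ (u+1) := by
  have hsplit : (X 0 : MvPolynomial (Fin 2) ℝ) ^ (2*u+2) * X 1 ^ (2*u+2) *
        (X 0 - X 1) ^ (2*u+2) * (X 0 + X 1) ^ (2*u+2) =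
      X 0 ^ (2*u+2) * X 1 ^ (2*u+2) * (X 0 ^ 2 - X 1 ^ 2) ^ (2*u+2) := by
    rw [← pows (2*u+2)]; ring
  rw [hsplit, coeff_core,
    sum_pick (2*u+2) (2*u+2) (2*u+2) _ _ (u+1) (by omega) (by omega) (by omega)]
  have : 2*u+2 - (u+1) = u+1 := by omega
  rw [this]

lemma cD (u : ℕ) :
    coeff (Finsupp.single 0 (4*u+4) + Finsupp.single 1 (4*u+4))
      ((X 0 : MvPolynomial (Fin 2) ℝ) ^ (2*u+2) * X 1 ^ (2*u+2) *
        (X 0 - X 1) ^ (2*u+3) * (X 0 + X 1) ^ (2*u+1)) = 0 := by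
  have hsplit : (X 0 : MvPolynomial (Fin 2) ℝ) ^ (2*u+2) * X 1 ^ (2*u+2) *
        (X 0 - X 1) ^ (2*u+3) * (X 0 + X 1) ^ (2*u+1) =
      X 0 ^ (2*u+4) * X 1 ^ (2*u+2) * (X 0 ^ 2 - X 1 ^ 2) ^ (2*u+1)
      - C (2:ℝ) * (X 0 ^ (2*u+3) * X 1 ^ (2*u+3) * (X 0 ^ 2 - X 1 ^ 2) ^ (2*u+1))
      + X 0 ^ (2*u+2) * X 1 ^ (2*u+4) * (X 0 ^ 2 - X 1 ^ 2) ^ (2*u+1) := by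
    rw [← pows (2*u+1), map_ofNat]
    ring
  rw [hsplit, coeff_add, coeff_sub, coeff_C_mul, coeff_core, coeff_core, coeff_core,
    sum_pick (2*u+1) (2*u+4) (2*u+2) _ _ u (by omega) (by omega) (by omega),
    sum_pick (2*u+1) (2*u+2) (2*u+4) _ _ (u+1) (by omega) (by omega) (by omega),
    sum_none (2*u+1) (2*u+3) (2*u+3) _ _ (by intro i hi ⟨h1, h2⟩; omega)]
  have h1 : 2*u+1 - u = u+1 := by omega
  have h2 : 2*u+1 - (u+1) = u := by omega
  have h3 : (2*u+1).choose u = (2*u+1).choose (u+1) := by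
    have h := Nat.choose_symm (n := 2*u+1) (k := u+1) (by omega)
    rw [show 2*u+1-(u+1) = u by omega] at h
    exact h
  rw [h1, h2, h3, mul_zero, sub_zero, pow_succ]
  ring

section Aux

noncomputable def Lf : ℕ × Fin 4 → MvPolynomial (Fin 2) ℝ :=
  fun p => ![X 0, X 1, X 0 - X 1, X 0 + X 1] p.2

def cf (α β γ δ : ℕ → ℝ) : ℕ × Fin 4 → ℝ :=
  fun p => ![-α p.1, -β p.1, -γ p.1, -δ p.1] p.2

def sBig (n : ℕ) : Finset (ℕ × Fin 4) := (Finset.Icc 1 n) ×ˢ Finset.univ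

noncomputable def sAll (n : ℕ) : Finset (ℕ × Fin 4) := insert (0, 2) (sBig n)

lemma notmem02 (n : ℕ) : ((0,2) : ℕ × Fin 4) ∉ sBig n := by
  simp [sBig]

lemma prodBig (n : ℕ) : ∏ i ∈ sBig n, Lf i =
    (X 0 * X 1 * (X 0 - X 1) * (X 0 + X 1) : MvPolynomial (Fin 2) ℝ) ^ n := by
  rw [sBig, Finset.prod_product]
  have h : ∀ j : ℕ, ∏ t : Fin 4, Lf (j, t) =
      (X 0 * X 1 * (X 0 - X 1) * (X 0 + X 1) : MvPolynomial (Fin 2) ℝ) := by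
    intro j
    rw [Fin.prod_univ_four]
    rfl
  rw [Finset.prod_congr rfl (fun j _ => h j), Finset.prod_const, Nat.card_Icc]
  norm_num

lemma prodEraseBig (n : ℕ) (i : ℕ × Fin 4) (hi : i ∈ sBig n) :
    Lf i * ∏ p ∈ (sBig n).erase i, Lf p =
    (X 0 * X 1 * (X 0 - X 1) * (X 0 + X 1) : MvPolynomial (Fin 2) ℝ) ^ n := by
  rw [Finset.mul_prod_erase _ _ hi, prodBig]

lemma qpow (n : ℕ) : (X 0 * X 1 * (X 0 - X 1) * (X 0 + X 1) : MvPolynomial (Fin 2) ℝ) ^ n =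
    X 0 ^ n * X 1 ^ n * (X 0 - X 1) ^ n * (X 0 + X 1) ^ n := by
  rw [mul_pow, mul_pow, mul_pow]

lemma X0ne : (X 0 : MvPolynomial (Fin 2) ℝ) ≠ 0 := X_ne_zero 0
lemma X1ne : (X 1 : MvPolynomial (Fin 2) ℝ) ≠ 0 := X_ne_zero 1

lemma Xsubne : (X 0 - X 1 : MvPolynomial (Fin 2) ℝ) ≠ 0 := by
  intro h
  have h2 := congrArg (eval ![(1:ℝ), 0]) h
  simp at h2

lemma Xaddne : (X 0 + X 1 : MvPolynomial (Fin 2) ℝ) ≠ 0 := by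
  intro h
  have h2 := congrArg (eval ![(1:ℝ), 0]) h
  simp at h2

lemma eraseProd0 (u j : ℕ) (hj : ((j, 0) : ℕ × Fin 4) ∈ sBig (2*u+2)) :
    ∏ p ∈ (sBig (2*u+2)).erase (j, 0), Lf p =
    (X 0 : MvPolynomial (Fin 2) ℝ)^(2*u+1) * X 1^(2*u+2) * (X 0 - X 1)^(2*u+2) * (X 0 + X 1)^(2*u+2) := by
  refine mul_left_cancel₀ X0ne ?_
  calc (X 0 : MvPolynomial (Fin 2) ℝ) * ∏ p ∈ (sBig (2*u+2)).erase (j, 0), Lf p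
      = Lf (j, 0) * ∏ p ∈ (sBig (2*u+2)).erase (j, 0), Lf p := rfl
    _ = (X 0 * X 1 * (X 0 - X 1) * (X 0 + X 1)) ^ (2*u+2) := prodEraseBig _ _ hj
    _ = X 0 ^ (2*u+2) * X 1 ^ (2*u+2) * (X 0 - X 1) ^ (2*u+2) * (X 0 + X 1) ^ (2*u+2) := qpow _
    _ = _ := by ring

lemma eraseProd1 (u j : ℕ) (hj : ((j, 1) : ℕ × Fin 4) ∈ sBig (2*u+2)) :
    ∏ p ∈ (sBig (2*u+2)).erase (j, 1), Lf p =
    (X 0 : MvPolynomial (Fin 2) ℝ)^(2*u+2) * X 1^(2*u+1) * (X 0 - X 1)^(2*u+2) * (X 0 + X 1)^(2*u+2) := by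
  refine mul_left_cancel₀ X1ne ?_
  calc (X 1 : MvPolynomial (Fin 2) ℝ) * ∏ p ∈ (sBig (2*u+2)).erase (j, 1), Lf p
      = Lf (j, 1) * ∏ p ∈ (sBig (2*u+2)).erase (j, 1), Lf p := rfl
    _ = (X 0 * X 1 * (X 0 - X 1) * (X 0 + X 1)) ^ (2*u+2) := prodEraseBig _ _ hj
    _ = X 0 ^ (2*u+2) * X 1 ^ (2*u+2) * (X 0 - X 1) ^ (2*u+2) * (X 0 + X 1) ^ (2*u+2) := qpow _
    _ = _ := by ring

lemma eraseProd2 (u j : ℕ) (hj : ((j, 2) : ℕ × Fin 4) ∈ sBig (2*u+2)) :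
    ∏ p ∈ (sBig (2*u+2)).erase (j, 2), Lf p =
    (X 0 : MvPolynomial (Fin 2) ℝ)^(2*u+2) * X 1^(2*u+2) * (X 0 - X 1)^(2*u+1) * (X 0 + X 1)^(2*u+2) := by
  refine mul_left_cancel₀ Xsubne ?_
  calc (X 0 - X 1 : MvPolynomial (Fin 2) ℝ) * ∏ p ∈ (sBig (2*u+2)).erase (j, 2), Lf p
      = Lf (j, 2) * ∏ p ∈ (sBig (2*u+2)).erase (j, 2), Lf p := rfl
    _ = (X 0 * X 1 * (X 0 - X 1) * (X 0 + X 1)) ^ (2*u+2) := prodEraseBig _ _ hj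
    _ = X 0 ^ (2*u+2) * X 1 ^ (2*u+2) * (X 0 - X 1) ^ (2*u+2) * (X 0 + X 1) ^ (2*u+2) := qpow _
    _ = _ := by ring

lemma eraseProd3 (u j : ℕ) (hj : ((j, 3) : ℕ × Fin 4) ∈ sBig (2*u+2)) :
    ∏ p ∈ (sBig (2*u+2)).erase (j, 3), Lf p =
    (X 0 : MvPolynomial (Fin 2) ℝ)^(2*u+2) * X 1^(2*u+2) * (X 0 - X 1)^(2*u+2) * (X 0 + X 1)^(2*u+1) := by
  refine mul_left_cancel₀ Xaddne ?_
  calc (X 0 + X 1 : MvPolynomial (Fin 2) ℝ) * ∏ p ∈ (sBig (2*u+2)).erase (j, 3), Lf p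
      = Lf (j, 3) * ∏ p ∈ (sBig (2*u+2)).erase (j, 3), Lf p := rfl
    _ = (X 0 * X 1 * (X 0 - X 1) * (X 0 + X 1)) ^ (2*u+2) := prodEraseBig _ _ hj
    _ = X 0 ^ (2*u+2) * X 1 ^ (2*u+2) * (X 0 - X 1) ^ (2*u+2) * (X 0 + X 1) ^ (2*u+2) := qpow _
    _ = _ := by ring

end Aux

lemma branch0 (u j : ℕ) (hj : ((j, (0:Fin 4)) : ℕ × Fin 4) ∈ sBig (2*u+2)) :
    coeff (Finsupp.single 0 (4*u+4) + Finsupp.single 1 (4*u+4))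
      (Lf (0, 2) * ∏ x ∈ (sBig (2*u+2)).erase (j, (0:Fin 4)), Lf x) =
    ((2*u+2).choose (u+1) : ℝ) * (-1)^(u+1) := by
  rw [eraseProd0 u j hj,
    show (Lf (0, 2)) * ((X 0 : MvPolynomial (Fin 2) ℝ)^(2*u+1) * X 1^(2*u+2) *
      (X 0 - X 1)^(2*u+2) * (X 0 + X 1)^(2*u+2)) =
      X 0^(2*u+1) * X 1^(2*u+2) * (X 0 - X 1)^(2*u+3) * (X 0 + X 1)^(2*u+2) from by
      show (X 0 - X 1 : MvPolynomial (Fin 2) ℝ) * _ = _; ring, cA]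

lemma branch1 (u j : ℕ) (hj : ((j, (1:Fin 4)) : ℕ × Fin 4) ∈ sBig (2*u+2)) :
    coeff (Finsupp.single 0 (4*u+4) + Finsupp.single 1 (4*u+4))
      (Lf (0, 2) * ∏ x ∈ (sBig (2*u+2)).erase (j, (1:Fin 4)), Lf x) =
    -(((2*u+2).choose (u+1) : ℝ) * (-1)^(u+1)) := by
  rw [eraseProd1 u j hj,
    show (Lf (0, 2)) * ((X 0 : MvPolynomial (Fin 2) ℝ)^(2*u+2) * X 1^(2*u+1) *
      (X 0 - X 1)^(2*u+2) * (X 0 + X 1)^(2*u+2)) =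
      X 0^(2*u+2) * X 1^(2*u+1) * (X 0 - X 1)^(2*u+3) * (X 0 + X 1)^(2*u+2) from by
      show (X 0 - X 1 : MvPolynomial (Fin 2) ℝ) * _ = _; ring, cB]

lemma branch2 (u j : ℕ) (hj : ((j, (2:Fin 4)) : ℕ × Fin 4) ∈ sBig (2*u+2)) :
    coeff (Finsupp.single 0 (4*u+4) + Finsupp.single 1 (4*u+4))
      (Lf (0, 2) * ∏ x ∈ (sBig (2*u+2)).erase (j, (2:Fin 4)), Lf x) =
    ((2*u+2).choose (u+1) : ℝ) * (-1)^(u+1) := by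
  rw [eraseProd2 u j hj,
    show (Lf (0, 2)) * ((X 0 : MvPolynomial (Fin 2) ℝ)^(2*u+2) * X 1^(2*u+2) *
      (X 0 - X 1)^(2*u+1) * (X 0 + X 1)^(2*u+2)) =
      X 0^(2*u+2) * X 1^(2*u+2) * (X 0 - X 1)^(2*u+2) * (X 0 + X 1)^(2*u+2) from by
      show (X 0 - X 1 : MvPolynomial (Fin 2) ℝ) * _ = _; ring, cG]

lemma branch3 (u j : ℕ) (hj : ((j, (3:Fin 4)) : ℕ × Fin 4) ∈ sBig (2*u+2)) :
    coeff (Finsupp.single 0 (4*u+4) + Finsupp.single 1 (4*u+4))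
      (Lf (0, 2) * ∏ x ∈ (sBig (2*u+2)).erase (j, (3:Fin 4)), Lf x) = 0 := by
  rw [eraseProd3 u j hj,
    show (Lf (0, 2)) * ((X 0 : MvPolynomial (Fin 2) ℝ)^(2*u+2) * X 1^(2*u+2) *
      (X 0 - X 1)^(2*u+2) * (X 0 + X 1)^(2*u+1)) =
      X 0^(2*u+2) * X 1^(2*u+2) * (X 0 - X 1)^(2*u+3) * (X 0 + X 1)^(2*u+1) from by
      show (X 0 - X 1 : MvPolynomial (Fin 2) ℝ) * _ = _; ring, cD]

theorem stmt_5 (k : ℕ) (hk : 1 ≤ k) (α β γ δ : ℕ → ℝ) :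
    MvPolynomial.coeff (Finsupp.single 0 (4 * k) + Finsupp.single 1 (4 * k))
      ((X 0 - X 1 - C (γ 0)) *
       ∏ j ∈ Finset.Icc 1 (2 * k),
         (X 0 - C (α j)) * (X 1 - C (β j)) * (X 0 - X 1 - C (γ j)) * (X 0 + X 1 - C (δ j)) :
        MvPolynomial (Fin 2) ℝ)
      = (-1 : ℝ) ^ k * (Nat.choose (2 * k) k : ℝ) *
        (∑ j ∈ Finset.Icc 1 (2 * k), (-(α j)) - ∑ j ∈ Finset.Icc 1 (2 * k), (-(β j)) +
         ∑ j ∈ Finset.Icc 0 (2 * k), (-(γ j))) := by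
  obtain ⟨u, rfl⟩ : ∃ u, k = u + 1 := ⟨k - 1, by omega⟩
  rw [show 4 * (u + 1) = 4 * u + 4 from by ring, show 2 * (u + 1) = 2 * u + 2 from by ring]
  have h02 : ((0, 2) : ℕ × Fin 4) ∉ sBig (2 * u + 2) := notmem02 _
  have hprod : ((X 0 - X 1 - C (γ 0)) *
      ∏ j ∈ Finset.Icc 1 (2 * u + 2),
        (X 0 - C (α j)) * (X 1 - C (β j)) * (X 0 - X 1 - C (γ j)) * (X 0 + X 1 - C (δ j))
      : MvPolynomial (Fin 2) ℝ) =
      ∏ i ∈ sAll (2 * u + 2), (Lf i + C (cf α β γ δ i)) := by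
    rw [sAll, Finset.prod_insert h02, show sBig (2 * u + 2) =
      Finset.Icc 1 (2 * u + 2) ×ˢ (Finset.univ : Finset (Fin 4)) from rfl,
      Finset.prod_product]
    refine congr_arg₂ (· * ·) ?_ ?_
    · show _ = (X 0 - X 1) + C (-γ 0)
      rw [map_neg, sub_eq_add_neg]
    · apply Finset.prod_congr rfl
      intro j _
      rw [Fin.prod_univ_four]
      show _ = (X 0 + C (-α j)) * (X 1 + C (-β j)) * ((X 0 - X 1) + C (-γ j)) *
        ((X 0 + X 1) + C (-δ j))
      rw [map_neg, map_neg, map_neg, map_neg]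
      ring
  have hhom : ∀ i ∈ sAll (2 * u + 2), (Lf i).IsHomogeneous 1 := by
    rintro ⟨j, t⟩ _
    fin_cases t
    · exact isHomogeneous_X _ _
    · exact isHomogeneous_X _ _
    · exact (isHomogeneous_X _ _).sub (isHomogeneous_X _ _)
    · exact (isHomogeneous_X _ _).add (isHomogeneous_X _ _)
  have hdeg : (Finsupp.single (0 : Fin 2) (4 * u + 4) +
      Finsupp.single 1 (4 * u + 4)).degree + 1 = (sAll (2 * u + 2)).card := by
    rw [deg2, sAll, Finset.card_insert_of_notMem h02, show sBig (2 * u + 2) =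
      Finset.Icc 1 (2 * u + 2) ×ˢ (Finset.univ : Finset (Fin 4)) from rfl,
      Finset.card_product]
    simp [Nat.card_Icc]
    omega
  rw [hprod, key _ Lf (cf α β γ δ) hhom _ hdeg]
  rw [sAll, Finset.sum_insert h02, Finset.erase_insert h02, prodBig, qpow, cG]
  have hterm : ∀ i ∈ sBig (2 * u + 2),
      cf α β γ δ i * coeff (Finsupp.single 0 (4 * u + 4) + Finsupp.single 1 (4 * u + 4))
        (∏ p ∈ (insert ((0 : ℕ), (2 : Fin 4)) (sBig (2 * u + 2))).erase i, Lf p) =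
      cf α β γ δ i * ![((2*u+2).choose (u+1) : ℝ) * (-1)^(u+1),
        -(((2*u+2).choose (u+1) : ℝ) * (-1)^(u+1)),
        ((2*u+2).choose (u+1) : ℝ) * (-1)^(u+1), 0] i.2 := by
    rintro ⟨j, t⟩ hi
    have hj1 : 1 ≤ j := by
      have := (Finset.mem_product.mp hi).1
      simpa using (Finset.mem_Icc.mp (by simpa [sBig] using this)).1
    have hne : ((j, t) : ℕ × Fin 4) ≠ (0, 2) := by
      intro h
      have := congrArg Prod.fst h
      simp at this
      omega
    have hnm : ((0, 2) : ℕ × Fin 4) ∉ (sBig (2 * u + 2)).erase (j, t) :=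
      fun h => h02 (Finset.mem_of_mem_erase h)
    rw [Finset.erase_insert_of_ne hne.symm, Finset.prod_insert hnm]
    congr 1
    fin_cases t
    · exact branch0 u j hi
    · exact branch1 u j hi
    · exact branch2 u j hi
    · exact branch3 u j hi
  rw [Finset.sum_congr rfl hterm, show sBig (2 * u + 2) =
    Finset.Icc 1 (2 * u + 2) ×ˢ (Finset.univ : Finset (Fin 4)) from rfl,
    Finset.sum_product]
  have hinner : ∀ j : ℕ, (∑ t : Fin 4, cf α β γ δ (j, t) *
      ![((2*u+2).choose (u+1) : ℝ) * (-1)^(u+1),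
        -(((2*u+2).choose (u+1) : ℝ) * (-1)^(u+1)),
        ((2*u+2).choose (u+1) : ℝ) * (-1)^(u+1), 0] (j, t).2) =
      -α j * (((2*u+2).choose (u+1) : ℝ) * (-1)^(u+1))
      + -β j * (-(((2*u+2).choose (u+1) : ℝ) * (-1)^(u+1)))
      + -γ j * (((2*u+2).choose (u+1) : ℝ) * (-1)^(u+1))
      + -δ j * 0 := by
    intro j
    rw [Fin.sum_univ_four]
    rfl
  rw [Finset.sum_congr rfl (fun j _ => hinner j),
    Finset.sum_add_distrib, Finset.sum_add_distrib, Finset.sum_add_distrib,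
    ← Finset.sum_mul, ← Finset.sum_mul, ← Finset.sum_mul, ← Finset.sum_mul,
    show Finset.Icc 0 (2*u+2) = insert 0 (Finset.Icc 1 (2*u+2)) from by ext x; simp; omega,
    Finset.sum_insert (by simp)]
  show (-γ 0) * _ + _ = _
  ring
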